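/- Highest-order transport-type estimate: Let $f, g : \mathbb{R}^2 \to \mathbb{R}$ be differentiable with $\nabla f$ and $\nabla g$ bounded, $D := \sup_{x,y} d(f,g)(x,y) < \infty$, and suppose the fourth partial derivative $\partial_{x_1}^4 f$ exists and lies in $L^2(\mathbb{R}^2)$. Then there is a universal constant $C$ such that $\int_{\mathbb{R}^2} \int_{\mathbb{R}^2} |\partial_{x_1}^4 f(x)|^2 \, \frac{|f(x) - g(x-y)| \, |(\nabla f(x) - \nabla g(x-y)) \cdot y|}{[|y|^2 + (f(x) - g(x-y))^2]^{5/2}}\, dx\, dy \le C\, \|\partial_{x_1}^4 f\|_{L^2}^2 \, \big(\sup_x|\nabla f(x)| + \sup_x|\nabla g(x)|\big)(D^3 + 1)$. -/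

import Mathlib

open MeasureTheory Filter Topology Real Set
open scoped RealInnerProductSpace ENNReal

noncomputable section

abbrev E2 := EuclideanSpace ℝ (Fin 2)

/-- `d(f,g)(x,y) = [|y|² + (f(x)-g(x-y))²]^{-1/2}`. -/
def dd (f g : E2 → ℝ) (x y : E2) : ℝ :=
  (‖y‖ ^ 2 + (f x - g (x - y)) ^ 2) ^ (-(1 / 2 : ℝ))

/-- The `L²(ℝ²)` norm of a function. -/
def l2norm (h : E2 → ℝ) : ℝ := (∫ x : E2, (h x) ^ 2) ^ (1 / 2 : ℝ)

/-- The partial derivative `∂_{x₁}`. -/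
def pd1 (h : E2 → ℝ) (x : E2) : ℝ := fderiv ℝ h x (EuclideanSpace.single 0 1)

/-- The fourth partial derivative `∂⁴_{x₁}`. -/
def pd1four (f : E2 → ℝ) : E2 → ℝ := pd1 (pd1 (pd1 (pd1 f)))

set_option maxHeartbeats 1600000 in
/-- **Highest-order transport-type estimate.**  There is a universal constant `C` such that
whenever `f, g` are differentiable with bounded gradients, `D = sup d(f,g) < ∞`, and the
fourth partial derivative `∂⁴_{x₁} f` exists and lies in `L²`,
`∫∫ |∂⁴_{x₁}f(x)|² |f(x)-g(x-y)| |(∇f(x)-∇g(x-y))⬝y| / [|y|²+(f(x)-g(x-y))²]^{5/2} dx dy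
  ≤ C ‖∂⁴_{x₁}f‖²_{L²} (sup|∇f| + sup|∇g|)(D³+1)`. -/
theorem highest_order_transport_estimate :
    ∃ C : ℝ, 0 < C ∧ ∀ f g : E2 → ℝ,
      Differentiable ℝ f → Differentiable ℝ g →
      Differentiable ℝ (pd1 f) → Differentiable ℝ (pd1 (pd1 f)) →
      Differentiable ℝ (pd1 (pd1 (pd1 f))) →
      BddAbove (Set.range fun x => ‖gradient f x‖) →
      BddAbove (Set.range fun x => ‖gradient g x‖) →
      BddAbove (Set.range fun p : E2 × E2 => dd f g p.1 p.2) →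
      MemLp (pd1four f) 2 volume →
      (∫⁻ y : E2, ∫⁻ x : E2, ENNReal.ofReal
          (|pd1four f x| ^ 2 * (|f x - g (x - y)| *
            |⟪gradient f x - gradient g (x - y), y⟫|) /
            (‖y‖ ^ 2 + (f x - g (x - y)) ^ 2) ^ (5 / 2 : ℝ))) ≤
        ENNReal.ofReal (C * l2norm (pd1four f) ^ 2 *
          ((⨆ x : E2, ‖gradient f x‖) + ⨆ x : E2, ‖gradient g x‖) *
          ((⨆ p : E2 × E2, dd f g p.1 p.2) ^ 3 + 1)) := by
  classical
  set I : ℝ := ∫ y : E2, (1 + ‖y‖) ^ (-(3 : ℝ)) with hIdef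
  have hI_int : Integrable (fun y : E2 => (1 + ‖y‖) ^ (-(3 : ℝ))) := by
    apply integrable_one_add_norm (μ := volume)
    simp [finrank_euclideanSpace_fin]
    norm_num
  have hI0 : 0 ≤ I := integral_nonneg fun y => Real.rpow_nonneg (by positivity) _
  refine ⟨8 * (I + 1), by positivity, ?_⟩
  intro f g hf hg _ _ _ hbf hbg hbd hmem
  set Sf := ⨆ x : E2, ‖gradient f x‖ with hSf
  set Sg := ⨆ x : E2, ‖gradient g x‖ with hSg
  set D := ⨆ p : E2 × E2, dd f g p.1 p.2 with hD
  have hSfle : ∀ x : E2, ‖gradient f x‖ ≤ Sf := fun x => by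
    rw [hSf]; exact le_ciSup hbf x
  have hSgle : ∀ x : E2, ‖gradient g x‖ ≤ Sg := fun x => by
    rw [hSg]; exact le_ciSup hbg x
  have hddle : ∀ x y : E2, dd f g x y ≤ D := fun x y => by
    rw [hD]; exact le_ciSup hbd (x, y)
  have hSf0 : 0 ≤ Sf := (norm_nonneg _).trans (hSfle 0)
  have hSg0 : 0 ≤ Sg := (norm_nonneg _).trans (hSgle 0)
  have hS0 : 0 ≤ Sf + Sg := add_nonneg hSf0 hSg0
  have hdd0 : ∀ x y : E2, 0 ≤ dd f g x y := fun x y => by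
    simp only [dd]; positivity
  have hD0 : 0 ≤ D := (hdd0 0 0).trans (hddle 0 0)
  have hD31 : (0 : ℝ) ≤ D ^ 3 + 1 := by
    have := pow_nonneg hD0 3; linarith
  have hK0 : (0 : ℝ) ≤ 8 * (Sf + Sg) * (D ^ 3 + 1) :=
    mul_nonneg (mul_nonneg (by norm_num) hS0) hD31
  -- the key pointwise bound
  have key : ∀ x y : E2,
      |pd1four f x| ^ 2 * (|f x - g (x - y)| *
          |⟪gradient f x - gradient g (x - y), y⟫|) /
          (‖y‖ ^ 2 + (f x - g (x - y)) ^ 2) ^ (5 / 2 : ℝ) ≤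
        |pd1four f x| ^ 2 *
          (8 * (Sf + Sg) * (D ^ 3 + 1) * (1 + ‖y‖) ^ (-(3 : ℝ))) := by
    intro x y
    set a := f x - g (x - y) with ha
    set r := ‖y‖ with hr
    have hr0 : 0 ≤ r := norm_nonneg y
    have hden0 : 0 ≤ r ^ 2 + a ^ 2 := by positivity
    have hrpow0 : (0 : ℝ) ≤ (1 + r) ^ (-(3 : ℝ)) := Real.rpow_nonneg (by positivity) _
    have hrhs0 : 0 ≤ |pd1four f x| ^ 2 *
        (8 * (Sf + Sg) * (D ^ 3 + 1) * (1 + r) ^ (-(3 : ℝ))) :=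
      mul_nonneg (sq_nonneg _) (mul_nonneg hK0 hrpow0)
    rcases eq_or_lt_of_le hden0 with hden | hden
    · have ha0 : a = 0 := by nlinarith [sq_nonneg r, sq_nonneg a]
      simpa [ha0] using hrhs0
    · set s := Real.sqrt (r ^ 2 + a ^ 2) with hs
      have hs0 : 0 < s := Real.sqrt_pos.mpr hden
      have hale : |a| ≤ s := by
        rw [hs, ← Real.sqrt_sq_eq_abs]
        exact Real.sqrt_le_sqrt (by nlinarith)
      have hrle : r ≤ s := by
        have h1 : r ^ 2 ≤ r ^ 2 + a ^ 2 := by nlinarith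
        calc r = Real.sqrt (r ^ 2) := (Real.sqrt_sq hr0).symm
          _ ≤ s := by rw [hs]; exact Real.sqrt_le_sqrt h1
      have hinner : |⟪gradient f x - gradient g (x - y), y⟫| ≤ (Sf + Sg) * s :=
        calc |⟪gradient f x - gradient g (x - y), y⟫|
            ≤ ‖gradient f x - gradient g (x - y)‖ * ‖y‖ := abs_real_inner_le_norm _ _
          _ ≤ (Sf + Sg) * s :=
              mul_le_mul ((norm_sub_le _ _).trans (add_le_add (hSfle x) (hSgle (x - y))))
                hrle hr0 hS0
      have hden_eq : (r ^ 2 + a ^ 2) ^ (5 / 2 : ℝ) = s ^ 5 := by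
        rw [hs, Real.sqrt_eq_rpow, ← Real.rpow_natCast ((r ^ 2 + a ^ 2) ^ ((1 : ℝ) / 2)) 5,
          ← Real.rpow_mul hden0]
        norm_num
      have hddD : 1 / s ≤ D := by
        have h1 := hddle x y
        have h2 : dd f g x y = 1 / s := by
          simp only [dd, ← ha, ← hr]
          rw [Real.rpow_neg hden0, one_div, hs, Real.sqrt_eq_rpow]
          norm_num
        rwa [h2] at h1
      have hcube : 1 / s ^ 3 ≤ 8 * (D ^ 3 + 1) * (1 + r) ^ (-(3 : ℝ)) := by
        have hpow : (1 + r) ^ (-(3 : ℝ)) = 1 / (1 + r) ^ 3 := by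
          rw [Real.rpow_neg (by positivity), ← Real.rpow_natCast (1 + r) 3]
          norm_num
        rw [hpow]
        have hD3 : 1 / s ^ 3 ≤ D ^ 3 := by
          have h1 : (1 / s) ^ 3 ≤ D ^ 3 := pow_le_pow_left₀ (by positivity) hddD 3
          calc 1 / s ^ 3 = (1 / s) ^ 3 := by rw [div_pow, one_pow]
            _ ≤ D ^ 3 := h1
        rcases le_total r 1 with hr1 | hr1
        · have h8 : (1 : ℝ) ≤ 8 * (1 / (1 + r) ^ 3) := by
            rw [mul_one_div, le_div_iff₀ (by positivity)]
            nlinarith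
          calc 1 / s ^ 3 ≤ D ^ 3 := hD3
            _ = (D ^ 3 + 1) * 1 - 1 := by ring
            _ ≤ (D ^ 3 + 1) * (8 * (1 / (1 + r) ^ 3)) - 1 := by
                have := mul_le_mul_of_nonneg_left h8 hD31
                linarith
            _ ≤ 8 * (D ^ 3 + 1) * (1 / (1 + r) ^ 3) := by
                have h9 : (D ^ 3 + 1) * (8 * (1 / (1 + r) ^ 3)) =
                    8 * (D ^ 3 + 1) * (1 / (1 + r) ^ 3) := by ring
                linarith [h9]
        · have hr0' : (0 : ℝ) < r := lt_of_lt_of_le one_pos hr1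
          have h1 : 1 / s ^ 3 ≤ 1 / r ^ 3 :=
            one_div_le_one_div_of_le (by positivity) (pow_le_pow_left₀ hr0'.le hrle 3)
          have h2 : 1 / r ^ 3 ≤ 8 * (1 / (1 + r) ^ 3) := by
            rw [mul_one_div, div_le_div_iff₀ (by positivity) (by positivity)]
            nlinarith
          have h3 : 8 * (1 / (1 + r) ^ 3) ≤ 8 * (D ^ 3 + 1) * (1 / (1 + r) ^ 3) := by
            have hc0 : (0 : ℝ) ≤ 1 / (1 + r) ^ 3 := by positivity
            nlinarith [pow_nonneg hD0 3]
          linarith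
      calc |pd1four f x| ^ 2 * (|a| * |⟪gradient f x - gradient g (x - y), y⟫|) /
            (r ^ 2 + a ^ 2) ^ (5 / 2 : ℝ)
          = |pd1four f x| ^ 2 * (|a| * |⟪gradient f x - gradient g (x - y), y⟫|) / s ^ 5 := by
            rw [hden_eq]
        _ ≤ |pd1four f x| ^ 2 * (s * ((Sf + Sg) * s)) / s ^ 5 := by
            rw [div_eq_mul_inv, div_eq_mul_inv]
            exact mul_le_mul_of_nonneg_right
              (mul_le_mul_of_nonneg_left
                (mul_le_mul hale hinner (abs_nonneg _) hs0.le) (sq_nonneg _))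
              (inv_nonneg.mpr (pow_nonneg hs0.le 5))
        _ = |pd1four f x| ^ 2 * ((Sf + Sg) * (1 / s ^ 3)) := by
            field_simp
        _ ≤ |pd1four f x| ^ 2 * ((Sf + Sg) * (8 * (D ^ 3 + 1) * (1 + r) ^ (-(3 : ℝ)))) :=
            mul_le_mul_of_nonneg_left (mul_le_mul_of_nonneg_left hcube hS0) (sq_nonneg _)
        _ = |pd1four f x| ^ 2 * (8 * (Sf + Sg) * (D ^ 3 + 1) * (1 + r) ^ (-(3 : ℝ))) := by
            ring
  -- integrability facts
  have hInt2 : Integrable (fun x : E2 => (pd1four f x) ^ 2) := hmem.integrable_sq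
  have hT0 : 0 ≤ ∫ x : E2, (pd1four f x) ^ 2 := integral_nonneg fun x => sq_nonneg _
  have hA : (∫⁻ x : E2, ENNReal.ofReal (|pd1four f x| ^ 2)) =
      ENNReal.ofReal (∫ x : E2, (pd1four f x) ^ 2) := by
    simp_rw [sq_abs]
    exact (ofReal_integral_eq_lintegral_ofReal hInt2 (ae_of_all _ fun x => sq_nonneg _)).symm
  have hIlint : (∫⁻ y : E2, ENNReal.ofReal ((1 + ‖y‖) ^ (-(3 : ℝ)))) = ENNReal.ofReal I := by
    rw [hIdef]
    exact (ofReal_integral_eq_lintegral_ofReal hI_int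
      (ae_of_all _ fun y => Real.rpow_nonneg (by positivity) _)).symm
  calc (∫⁻ y : E2, ∫⁻ x : E2, ENNReal.ofReal
          (|pd1four f x| ^ 2 * (|f x - g (x - y)| *
            |⟪gradient f x - gradient g (x - y), y⟫|) /
            (‖y‖ ^ 2 + (f x - g (x - y)) ^ 2) ^ (5 / 2 : ℝ)))
      ≤ ∫⁻ y : E2, ∫⁻ x : E2, ENNReal.ofReal (|pd1four f x| ^ 2) *
          ENNReal.ofReal (8 * (Sf + Sg) * (D ^ 3 + 1) * (1 + ‖y‖) ^ (-(3 : ℝ))) := by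
        refine lintegral_mono fun y => lintegral_mono fun x => ?_
        rw [← ENNReal.ofReal_mul (sq_nonneg _)]
        exact ENNReal.ofReal_le_ofReal (key x y)
    _ = ∫⁻ y : E2, (∫⁻ x : E2, ENNReal.ofReal (|pd1four f x| ^ 2)) *
          ENNReal.ofReal (8 * (Sf + Sg) * (D ^ 3 + 1) * (1 + ‖y‖) ^ (-(3 : ℝ))) :=
        lintegral_congr fun y => lintegral_mul_const' _ _ ENNReal.ofReal_ne_top
    _ = ENNReal.ofReal (∫ x : E2, (pd1four f x) ^ 2) *
          ∫⁻ y : E2, ENNReal.ofReal (8 * (Sf + Sg) * (D ^ 3 + 1) * (1 + ‖y‖) ^ (-(3 : ℝ))) := by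
        simp_rw [hA]
        exact lintegral_const_mul' _ _ ENNReal.ofReal_ne_top
    _ = ENNReal.ofReal (∫ x : E2, (pd1four f x) ^ 2) *
          (ENNReal.ofReal (8 * (Sf + Sg) * (D ^ 3 + 1)) *
            ∫⁻ y : E2, ENNReal.ofReal ((1 + ‖y‖) ^ (-(3 : ℝ)))) := by
        congr 1
        simp_rw [fun y : E2 => ENNReal.ofReal_mul (q := (1 + ‖y‖) ^ (-(3 : ℝ))) hK0]
        exact lintegral_const_mul' _ _ ENNReal.ofReal_ne_top
    _ = ENNReal.ofReal ((∫ x : E2, (pd1four f x) ^ 2) *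
          (8 * (Sf + Sg) * (D ^ 3 + 1) * I)) := by
        rw [hIlint, ← ENNReal.ofReal_mul hK0, ← ENNReal.ofReal_mul hT0]
    _ ≤ ENNReal.ofReal (8 * (I + 1) * l2norm (pd1four f) ^ 2 * (Sf + Sg) * (D ^ 3 + 1)) := by
        apply ENNReal.ofReal_le_ofReal
        have hl2 : l2norm (pd1four f) ^ 2 = ∫ x : E2, (pd1four f x) ^ 2 := by
          simp only [l2norm]
          rw [← Real.rpow_natCast ((∫ x : E2, (pd1four f x) ^ 2) ^ ((1 : ℝ) / 2)) 2,
            ← Real.rpow_mul hT0]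
          norm_num
        rw [hl2]
        nlinarith [mul_nonneg (mul_nonneg hT0 hS0) hD31]
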